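/- Let Ĝ be a connected hypergraph and G a tiling of Ĝ via the vertex map f : V → V̂. Then f is surjective, and moreover all fibers f⁻¹({v̂}) for v̂ ∈ V̂ have the same cardinality. -/

import Mathlib

/-- A hypergraph over a ranked alphabet `(Sym, ar)`: a finite nonempty vertex set `V`
with labels `l : V → Sym`, whose set of hyperedges `E` is a partition of the port set
`P_G = {(v, j) : v ∈ V, j < ar (l v)}`. -/
structure RankedHypergraph (Sym : Type) (ar : Sym → ℕ) where
  V : Type
  fin : Fintype V
  nonempty : Nonempty V
  l : V → Sym
  E : Set (Set ((v : V) × Fin (ar (l v))))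
  cover : ∀ p : (v : V) × Fin (ar (l v)), ∃! h, h ∈ E ∧ p ∈ h
  edges_nonempty : ∀ h ∈ E, h.Nonempty

namespace RankedHypergraph

variable {Sym : Type} {ar : Sym → ℕ}

/-- The ports of a hypergraph. -/
abbrev Port (G : RankedHypergraph Sym ar) := (v : G.V) × Fin (ar (G.l v))

/-- A hypergraph is connected if for every partition of the vertices into two nonempty
parts, some hyperedge contains ports of vertices from both parts. -/
def Connected (G : RankedHypergraph Sym ar) : Prop :=
  ∀ V1 V2 : Set G.V, V1 ∪ V2 = Set.univ → Disjoint V1 V2 →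
    V1.Nonempty → V2.Nonempty →
    ∃ h ∈ G.E, ∃ p q : G.Port, p ∈ h ∧ q ∈ h ∧ p.1 ∈ V1 ∧ q.1 ∈ V2

/-- The map induced on ports by a label-preserving vertex map, `g(v, i) = (f v, i)`. -/
def portMap (G H : RankedHypergraph Sym ar) (f : G.V → H.V)
    (hl : ∀ v, H.l (f v) = G.l v) : G.Port → H.Port :=
  fun p => ⟨f p.1, Fin.cast (congrArg ar (hl p.1)).symm p.2⟩

/-- `G` is a tiling of `H` via the label-preserving vertex map `f` if the induced port
map sends every hyperedge of `G` bijectively onto a hyperedge of `H`. -/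
def IsTiling (G H : RankedHypergraph Sym ar) (f : G.V → H.V)
    (hl : ∀ v, H.l (f v) = G.l v) : Prop :=
  ∀ h ∈ G.E, portMap G H f hl '' h ∈ H.E ∧ Set.InjOn (portMap G H f hl) h

end RankedHypergraph

open RankedHypergraph in
lemma fiber_card_eq {Sym : Type} {ar : Sym → ℕ}
    (G H : RankedHypergraph Sym ar) (f : G.V → H.V) (hl : ∀ v, H.l (f v) = G.l v)
    (ht : IsTiling G H f hl) {eh : Set H.Port} (heh : eh ∈ H.E)
    (w : H.V) (i : Fin (ar (H.l w))) (hi : (⟨w, i⟩ : H.Port) ∈ eh) :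
    Nat.card {v : G.V // f v = w} =
      Nat.card {h : Set G.Port // h ∈ G.E ∧ portMap G H f hl '' h = eh} := by
  have e : ∀ v : {v : G.V // f v = w}, ar (H.l w) = ar (G.l v.1) := by
    rintro ⟨v, rfl⟩; exact congrArg ar (hl v)
  set pv : {v : G.V // f v = w} → G.Port := fun v => ⟨v.1, Fin.cast (e v) i⟩ with hpv
  have hpm : ∀ v : {v : G.V // f v = w}, portMap G H f hl (pv v) = ⟨w, i⟩ := by
    rintro ⟨v, rfl⟩
    simp [portMap, hpv]
    exact Fin.ext rfl
  -- the map F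
  have Fdef : ∀ v : {v : G.V // f v = w},
      ∃ h : {h : Set G.Port // h ∈ G.E ∧ portMap G H f hl '' h = eh}, pv v ∈ h.1 := by
    intro v
    obtain ⟨h, ⟨hE, hmem⟩, _⟩ := G.cover (pv v)
    have himg : portMap G H f hl '' h ∈ H.E := (ht h hE).1
    have : (⟨w, i⟩ : H.Port) ∈ portMap G H f hl '' h := by
      rw [← hpm v]; exact Set.mem_image_of_mem _ hmem
    exact ⟨⟨h, hE, (H.cover ⟨w, i⟩).unique ⟨himg, this⟩ ⟨heh, hi⟩⟩, hmem⟩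
  choose F hF using Fdef
  apply Nat.card_eq_of_bijective F
  constructor
  · intro v₁ v₂ hFv
    have h1 : pv v₁ ∈ (F v₁).1 := hF v₁
    have h2 : pv v₂ ∈ (F v₁).1 := by rw [hFv]; exact hF v₂
    have hinj := (ht (F v₁).1 (F v₁).2.1).2
    have : pv v₁ = pv v₂ := hinj h1 h2 (by rw [hpm v₁, hpm v₂])
    exact Subtype.ext (congrArg Sigma.fst this)
  · rintro ⟨h, hE, himg⟩
    have : (⟨w, i⟩ : H.Port) ∈ portMap G H f hl '' h := himg ▸ hi
    obtain ⟨p, hp, hpp⟩ := this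
    have hw : f p.1 = w := congrArg Sigma.fst hpp
    subst hw
    refine ⟨⟨p.1, rfl⟩, ?_⟩
    have hpv : pv ⟨p.1, rfl⟩ = p := by
      simp only [portMap] at hpp
      have h2 : Fin.cast (congrArg ar (hl p.1)).symm p.2 = i := by
        have := (Sigma.mk.inj_iff.mp hpp).2
        exact eq_of_heq this
      refine Sigma.ext rfl ?_
      rw [heq_eq_eq]
      apply Fin.ext
      exact (congrArg Fin.val h2).symm
    have hmem : p ∈ (F ⟨p.1, rfl⟩).1 := by have h3 := hF ⟨p.1, rfl⟩; rwa [hpv] at h3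
    have := (G.cover p).unique ⟨(F ⟨p.1, rfl⟩).2.1, hmem⟩ ⟨hE, hp⟩
    exact Subtype.ext this

open RankedHypergraph in
/-- If `G` is a tiling of a connected hypergraph `Ĝ` via `f`, then `f` is surjective
and all its fibers have the same cardinality. -/
theorem tiling_surjective_and_constant_fibers {Sym : Type} {ar : Sym → ℕ}
    (G H : RankedHypergraph Sym ar) (f : G.V → H.V) (hl : ∀ v, H.l (f v) = G.l v)
    (ht : IsTiling G H f hl) (hc : H.Connected) :
    Function.Surjective f ∧
      ∀ w₁ w₂ : H.V, Nat.card {v : G.V // f v = w₁} = Nat.card {v : G.V // f v = w₂} := by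
  haveI := G.fin
  have key : ∀ w₁ w₂ : H.V,
      Nat.card {v : G.V // f v = w₁} = Nat.card {v : G.V // f v = w₂} := by
    intro w₁ w₂
    by_contra hne
    set S := {w : H.V | Nat.card {v : G.V // f v = w} = Nat.card {v : G.V // f v = w₁}}
      with hS
    obtain ⟨h, hE, p, q, hp, hq, hp1, hq1⟩ :=
      hc S Sᶜ (by simp) disjoint_compl_right ⟨w₁, rfl⟩ ⟨w₂, fun hmem => hne hmem.symm⟩
    have e₁ := fiber_card_eq G H f hl ht hE p.1 p.2 hp
    have e₂ := fiber_card_eq G H f hl ht hE q.1 q.2 hq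
    exact hq1 (by rw [hS, Set.mem_setOf_eq, e₂, ← e₁]; exact hp1)
  refine ⟨?_, key⟩
  intro w
  obtain ⟨v0⟩ := G.nonempty
  have hpos : 0 < Nat.card {v : G.V // f v = w} := by
    rw [key w (f v0)]
    have : Nonempty {v : G.V // f v = f v0} := ⟨⟨v0, rfl⟩⟩
    exact Nat.card_pos
  obtain ⟨⟨v, hv⟩⟩ := (Nat.card_pos_iff.mp hpos).1
  exact ⟨v, hv⟩
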